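/- Let k ≥ 0 be an integer, a' ≥ 0, and let f : ℝ → ℝ satisfy −a'(1 + |η|^{2k+1} 𝟙_{η ≥ 0}) ≤ f(η) ≤ a'(1 + |η|^{2k+1} 𝟙_{η ≤ 0}) for all η ∈ ℝ. Then f(η + ζ) · sgn(η) ≤ a'(1 + |ζ|^{2k+1}) for all η, ζ ∈ ℝ. -/

import Mathlib

/-- the translated dissipativity bound for the reaction term. -/
theorem stmt_18 (k : ℕ) (a' : ℝ) (ha' : 0 ≤ a') (f : ℝ → ℝ)
    (hf : ∀ η : ℝ,
      -a' * (1 + |η| ^ (2 * k + 1) * (if 0 ≤ η then (1:ℝ) else 0)) ≤ f η ∧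
        f η ≤ a' * (1 + |η| ^ (2 * k + 1) * (if η ≤ 0 then (1:ℝ) else 0))) :
    ∀ η ζ : ℝ, f (η + ζ) * Real.sign η ≤ a' * (1 + |ζ| ^ (2 * k + 1)) := by
  intro η ζ
  have hp : (0:ℝ) ≤ |ζ| ^ (2 * k + 1) := by positivity
  rcases lt_trichotomy η 0 with hη | hη | hη
  · rw [Real.sign_of_neg hη]
    have h := (hf (η + ζ)).1
    rw [mul_neg_one, neg_le]
    refine le_trans ?_ h
    by_cases hc : 0 ≤ η + ζ
    · rw [if_pos hc, mul_one]
      have hle : |η + ζ| ≤ |ζ| := by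
        rw [abs_of_nonneg hc, abs_of_pos (by linarith)]
        linarith
      have := pow_le_pow_left₀ (abs_nonneg _) hle (2 * k + 1)
      nlinarith
    · rw [if_neg hc, mul_zero, add_zero]
      nlinarith
  · rw [hη, Real.sign_zero, mul_zero]
    nlinarith
  · rw [Real.sign_of_pos hη, mul_one]
    have h := (hf (η + ζ)).2
    refine le_trans h ?_
    by_cases hc : η + ζ ≤ 0
    · rw [if_pos hc, mul_one]
      have hle : |η + ζ| ≤ |ζ| := by
        rw [abs_of_nonpos hc, abs_of_neg (by linarith)]
        linarith
      have := pow_le_pow_left₀ (abs_nonneg _) hle (2 * k + 1)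
      nlinarith
    · rw [if_neg hc, mul_zero, add_zero]
      nlinarith
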